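/- Let (K(X)|K,v) be a residue transcendental extension with minimal pair of definition (a,γ). Embed vK̄ into the lexicographically ordered group vK̄ ⊕ ℤ via α ↦ (α,0), set Γ := (γ,-1), and let w := v_{a,Γ} be the valuation on K̄(X) defined on polynomials Σ c_i (X-a)^i by w(Σ c_i (X-a)^i) = min_i (v(c_i) + iΓ). Then (a,Γ) is a minimal pair of definition for w over K, w is value transcendental, and j(a,K,γ) = j(a,K,Γ), where j(a,K,δ) denotes the number of K-conjugates a' of a (counted with multiplicity, including a) with v(a - a') ≥ δ. -/

import Mathlib

open IntermediateField Polynomial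

namespace ValPaper

variable {Ω Γ : Type*} [Field Ω] [AddCommGroup Γ] [LinearOrder Γ] [IsOrderedAddMonoid Γ]

section Defs

variable (K : Type*) [Field K] [Algebra K Ω]

/-- The value group of an intermediate field `F` under the valuation `v`:
the subgroup of `Γ` generated by (equal to) the set of values of nonzero elements of `F`. -/
noncomputable def valGroup (v : AddValuation Ω (WithTop Γ)) (F : IntermediateField K Ω) :
    AddSubgroup Γ :=
  AddSubgroup.closure {g : Γ | ∃ x ∈ F, x ≠ 0 ∧ v x = (g : WithTop Γ)}

/-- The ramification index `(vM : vF)`. -/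
noncomputable def ramIndex (v : AddValuation Ω (WithTop Γ)) (F M : IntermediateField K Ω) : ℕ :=
  (valGroup K v F).relIndex (valGroup K v M)

/-- The valuation ring `O_F` of an intermediate field `F`. -/
noncomputable def integers (v : AddValuation Ω (WithTop Γ)) (F : IntermediateField K Ω) :
    Subring Ω where
  carrier := {x | x ∈ F ∧ 0 ≤ v x}
  zero_mem' := ⟨zero_mem F, by simp⟩
  one_mem' := ⟨one_mem F, by simp⟩
  add_mem' := fun hx hy => ⟨add_mem hx.1 hy.1, le_trans (le_min hx.2 hy.2) (v.map_add _ _)⟩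
  mul_mem' := fun hx hy => ⟨mul_mem hx.1 hy.1, by rw [v.map_mul]; exact add_nonneg hx.2 hy.2⟩
  neg_mem' := fun hx => ⟨neg_mem hx.1, by rw [v.map_neg]; exact hx.2⟩

/-- The maximal ideal of the valuation ring of `F`. -/
noncomputable def maxIdeal (v : AddValuation Ω (WithTop Γ)) (F : IntermediateField K Ω) :
    Ideal (integers K v F) where
  carrier := {x | 0 < v (x : Ω)}
  zero_mem' := by
    show (0 : WithTop Γ) < v ((0 : integers K v F) : Ω)
    rw [show ((0 : integers K v F) : Ω) = 0 from rfl, v.map_zero]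
    exact lt_of_le_of_ne le_top (by simp)
  add_mem' := fun {x y} hx hy => lt_of_lt_of_le (lt_min hx hy) (v.map_add _ _)
  smul_mem' := fun c {x} hx => by
    show (0 : WithTop Γ) < v ((c : Ω) * (x : Ω))
    rw [v.map_mul]
    exact lt_of_lt_of_le hx (le_add_of_nonneg_left c.2.2)

/-- The residue ring (in fact field) `Fv` of an intermediate field `F`. -/
noncomputable abbrev Res (v : AddValuation Ω (WithTop Γ)) (F : IntermediateField K Ω) :=
  integers K v F ⧸ maxIdeal K v F

lemma integers_mono (v : AddValuation Ω (WithTop Γ)) {F M : IntermediateField K Ω} (h : F ≤ M) :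
    integers K v F ≤ integers K v M := fun _ hx => ⟨h hx.1, hx.2⟩

/-- The canonical map between residue fields induced by an inclusion of intermediate fields. -/
noncomputable def resMap (v : AddValuation Ω (WithTop Γ)) {F M : IntermediateField K Ω}
    (h : F ≤ M) : Res K v F →+* Res K v M :=
  Ideal.quotientMap (maxIdeal K v M) (Subring.inclusion (integers_mono K v h))
    (fun _ hx => hx)

set_option synthInstance.maxHeartbeats 1000000 in
open scoped Classical in
/-- The residue degree `[Mv : Fv]` (junk value `0` if `F ≰ M`). -/
noncomputable def resDeg (v : AddValuation Ω (WithTop Γ)) (F M : IntermediateField K Ω) : ℕ :=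
  if h : F ≤ M then
    letI := (resMap K v h).toAlgebra
    Module.finrank (Res K v F) (Res K v M)
  else 0

/-- The defect `d(M|F,v)`, defined via the Lemma of Ostrowski as
`[M : F] / ((vM : vF) · [Mv : Fv])`. -/
noncomputable def defect (v : AddValuation Ω (WithTop Γ)) (F M : IntermediateField K Ω) : ℕ :=
  relfinrank F M / (ramIndex K v F M * resDeg K v F M)

end Defs

section DefsBase

variable (F : Type*) [Field F] [Algebra F Ω]

open scoped Classical in
/-- `jnum v F a γ` is the number of `F`-conjugates `a'` of `a` (counted with multiplicity,
including `a` itself) such that `v (a - a') ≥ γ`. -/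
noncomputable def jnum (v : AddValuation Ω (WithTop Γ)) (a : Ω) (γ : Γ) : ℕ :=
  Multiset.card (((minpoly F a).aroots Ω).filter fun r => (γ : WithTop Γ) ≤ v (a - r))

/-- `(a, γ)` is a minimal pair of definition for `v` over `F`:
(MP0) `a` is algebraic over `F` (i.e. `a ∈ F̄`),
(MP1) `v (X - a) = γ = max v (X - F̄)`, and
(MP2) `v (a - b) ≥ γ` implies `[F(b) : F] ≥ [F(a) : F]` for all `b ∈ F̄`. -/
def IsMinimalPair (v : AddValuation Ω (WithTop Γ)) (X a : Ω) (γ : Γ) : Prop :=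
  IsAlgebraic F a ∧ v (X - a) = (γ : WithTop Γ) ∧
    (∀ c : Ω, IsAlgebraic F c → v (X - c) ≤ (γ : WithTop Γ)) ∧
    ∀ b : Ω, IsAlgebraic F b → (γ : WithTop Γ) ≤ v (a - b) →
      Module.finrank F ↥(IntermediateField.adjoin F {a}) ≤
        Module.finrank F ↥(IntermediateField.adjoin F {b})

/-- The decomposition group of `(F, v)` in `Ω`: all `F`-automorphisms compatible with `v`. -/
def decompGroup (v : AddValuation Ω (WithTop Γ)) : Subgroup (Ω ≃ₐ[F] Ω) where
  carrier := {σ | ∀ x : Ω, v (σ x) = v x}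
  one_mem' := fun _ => rfl
  mul_mem' := fun {σ τ} hσ hτ x => by
    rw [AlgEquiv.mul_apply, hσ, hτ]
  inv_mem' := fun {σ} hσ x => by
    have h := hσ (σ⁻¹ x)
    rw [show σ (σ⁻¹ x) = x from AlgEquiv.apply_symm_apply σ x] at h
    exact h.symm

/-- The henselization (= absolute decomposition field) of `(F, v)` inside `Ω`:
the elements of the separable closure of `F` fixed by the decomposition group. -/
noncomputable def henselAux (v : AddValuation Ω (WithTop Γ)) : IntermediateField F Ω :=
  separableClosure F Ω ⊓ IntermediateField.fixedField (decompGroup F v)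

/-- The ramification group of `(F, v)` in `Ω`. -/
noncomputable def ramGroup (v : AddValuation Ω (WithTop Γ)) : Subgroup (Ω ≃ₐ[F] Ω) :=
  Subgroup.closure {σ | ∀ x ∈ separableClosure F Ω, x ≠ 0 → v x < v (σ x - x)}

/-- The absolute ramification field `F^r` of `(F, v)` inside `Ω`. -/
noncomputable def ramField (v : AddValuation Ω (WithTop Γ)) : IntermediateField F Ω :=
  separableClosure F Ω ⊓ IntermediateField.fixedField (ramGroup F v)

end DefsBase

section DefsK

variable (K : Type*) [Field K] [Algebra K Ω]

/-- The henselization of an intermediate field `F`, viewed inside `IntermediateField K Ω`. -/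
noncomputable def hensel (v : AddValuation Ω (WithTop Γ)) (F : IntermediateField K Ω) :
    IntermediateField K Ω :=
  (henselAux (↥F) v).restrictScalars K

/-- The relative algebraic closure `K̄` of `K` in `Ω` (as an intermediate field; when `Ω` is
algebraically closed this is an algebraic closure of `K`). -/
noncomputable def algCl : IntermediateField K Ω :=
  IntermediateField.adjoin K {x : Ω | IsAlgebraic K x}

/-- The implicit constant field `IC (K(X)|K, v) := K̄ ∩ K(X)^h`. -/
noncomputable def ICfield (v : AddValuation Ω (WithTop Γ)) (X : Ω) : IntermediateField K Ω :=
  algCl K ⊓ hensel K v (IntermediateField.adjoin K {X})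

/-- `(K(X)|K, v)` is value transcendental: `vK(X)/vK` has a nontorsion element,
i.e. `rat rk vK(X)/vK = 1`. -/
def ValueTrans (v : AddValuation Ω (WithTop Γ)) (X : Ω) : Prop :=
  ∃ g : Γ, g ∈ valGroup K v (IntermediateField.adjoin K {X}) ∧
    ∀ n : ℕ, 0 < n → n • g ∉ valGroup K v (⊥ : IntermediateField K Ω)

/-- `(K(X)|K, v)` is residue transcendental: the residue field of `K(X)` contains an element
transcendental over the residue field of `K`, i.e. `trdeg (K(X)v | Kv) = 1`. -/
def ResidueTrans (v : AddValuation Ω (WithTop Γ)) (X : Ω) : Prop :=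
  letI := (resMap K v (bot_le : (⊥ : IntermediateField K Ω) ≤
    IntermediateField.adjoin K {X})).toAlgebra
  ∃ ξ : Res K v (IntermediateField.adjoin K {X}),
    Transcendental (Res K v (⊥ : IntermediateField K Ω)) ξ

/-- `(K(X)|K, v)` is valuation transcendental: equality holds in the Abhyankar inequality,
i.e. the extension is value transcendental or residue transcendental. -/
def ValuationTrans (v : AddValuation Ω (WithTop Γ)) (X : Ω) : Prop :=
  ValueTrans K v X ∨ ResidueTrans K v X

/-- `(K, v)` is a defectless field: every finite extension `M` of the henselization `K^h`
(inside `K̄ ⊆ Ω`) satisfies `[M : K^h] = (vM : vK^h)[Mv : K^h v]`. -/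
def DefectlessField (v : AddValuation Ω (WithTop Γ)) : Prop :=
  ∀ M : IntermediateField K Ω, hensel K v ⊥ ≤ M → (∀ x ∈ M, IsAlgebraic K x) →
    relfinrank (hensel K v ⊥) M ≠ 0 →
    relfinrank (hensel K v ⊥) M = ramIndex K v (hensel K v ⊥) M * resDeg K v (hensel K v ⊥) M

end DefsK

/-- The maximal ideal of the valuation ring is indeed maximal. -/
lemma maxIdeal_isMaximal (K : Type*) [Field K] [Algebra K Ω] (v : AddValuation Ω (WithTop Γ))
    (F : IntermediateField K Ω) : (maxIdeal K v F).IsMaximal := by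
  rw [Ideal.isMaximal_iff]
  constructor
  · show ¬ (0 : WithTop Γ) < v ((1 : Ω))
    rw [v.map_one]
    exact lt_irrefl _
  · intro J x hIJ hxI hxJ
    have hx0 : 0 ≤ v (x : Ω) := x.2.2
    have hxv : v (x : Ω) = 0 := le_antisymm (not_lt.mp hxI) hx0
    have hxne : (x : Ω) ≠ 0 := by
      intro h
      rw [h, v.map_zero] at hxv
      simp at hxv
    have hinv : v ((x : Ω)⁻¹) = 0 := by
      rw [v.map_inv, hxv]; simp
    have hmem : (x : Ω)⁻¹ ∈ integers K v F :=
      ⟨inv_mem (x.2.1 : (x : Ω) ∈ F), le_of_eq hinv.symm⟩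
    have : (⟨(x : Ω)⁻¹, hmem⟩ * x : integers K v F) = 1 := by
      ext
      exact inv_mul_cancel₀ hxne
    have h1 : (⟨(x : Ω)⁻¹, hmem⟩ * x : integers K v F) ∈ J := J.mul_mem_left _ hxJ
    rwa [this] at h1

/-- The residue ring of an intermediate field is a field. -/
noncomputable def resField (K : Type*) [Field K] [Algebra K Ω] (v : AddValuation Ω (WithTop Γ))
    (F : IntermediateField K Ω) : Field (Res K v F) :=
  letI := maxIdeal_isMaximal K v F
  Ideal.Quotient.field _


section Aux

variable {Γ : Type*} [AddCommGroup Γ] [LinearOrder Γ] [IsOrderedAddMonoid Γ]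

/-- The additive projection onto the second (`ℤ`) coordinate of `Γ ×ₗ ℤ`. -/
def sndHom : (Γ ×ₗ ℤ) →+ ℤ where
  toFun g := (ofLex g).2
  map_zero' := rfl
  map_add' _ _ := rfl

lemma lex_le_iff (γ δ : Γ) :
    toLex (γ, (-1 : ℤ)) ≤ toLex (δ, (0 : ℤ)) ↔ γ ≤ δ := by
  rw [Prod.Lex.le_iff]
  constructor
  · rintro (h | ⟨h, -⟩)
    · exact h.le
    · exact h.le
  · intro h
    rcases h.lt_or_eq with h | h
    · exact Or.inl h
    · exact Or.inr ⟨h, by norm_num⟩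

lemma addval_ne_top {Ω : Type*} [Field Ω] (u : AddValuation Ω (WithTop Γ))
    {x : Ω} (hx : x ≠ 0) : u x ≠ ⊤ := by
  intro h
  have h1 : u x + u x⁻¹ = 0 := by rw [← u.map_mul, mul_inv_cancel₀ hx, u.map_one]
  rw [h, top_add] at h1
  exact (WithTop.top_ne_zero h1)

end Aux

/-- Lemma 4.1. For a residue transcendental extension with minimal pair
`(a, γ)`, embedding `vK̄` into `vK̄ ⊕ ℤ` (lex) by `α ↦ (α, 0)` and setting `Γ := (γ, -1)`, the
monomial valuation `w = v_{a,Γ}` has `(a, Γ)` as a minimal pair over `K`, is value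
transcendental, and `j(a,K,γ) = j(a,K,Γ)`. -/

theorem stmt_6 {K Ω Γ : Type*} [Field K] [Field Ω] [Algebra K Ω] [IsAlgClosed Ω]
    [AddCommGroup Γ] [LinearOrder Γ] [IsOrderedAddMonoid Γ]
    (v : AddValuation Ω (WithTop Γ)) (X : Ω) (hX : Transcendental K X)
    [Algebra.IsAlgebraic ↥(IntermediateField.adjoin K {X}) Ω]
    (hrt : ResidueTrans K v X) (a : Ω) (γ : Γ) (hmp : IsMinimalPair K v X a γ)
    (w : AddValuation Ω (WithTop (Γ ×ₗ ℤ)))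
    (hw : ∀ f : Polynomial ↥(algCl K : IntermediateField K Ω),
      w (Polynomial.aeval X f) =
        Finset.inf (Finset.range (f.natDegree + 1)) (fun i =>
          WithTop.map (fun g : Γ => toLex (g, (0 : ℤ)))
              (v (((Polynomial.taylor
                (⟨a, IntermediateField.subset_adjoin K {x : Ω | IsAlgebraic K x} hmp.1⟩ :
                  ↥(algCl K : IntermediateField K Ω)) f).coeff i : Ω))) +
            ((i • toLex (γ, (-1 : ℤ)) : Γ ×ₗ ℤ) : WithTop (Γ ×ₗ ℤ)))) :
    IsMinimalPair K w X a (toLex (γ, (-1 : ℤ))) ∧ ValueTrans K w X ∧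
      jnum K v a γ = jnum K w a (toLex (γ, (-1 : ℤ))) := by
  classical
  -- Notation
  set Γ₀ : Γ ×ₗ ℤ := toLex (γ, (-1 : ℤ)) with hΓ₀
  set emb : Γ → Γ ×ₗ ℤ := fun g => toLex (g, (0 : ℤ)) with hemb
  have haA : a ∈ (algCl K : IntermediateField K Ω) :=
    IntermediateField.subset_adjoin K {x : Ω | IsAlgebraic K x} hmp.1
  set a' : ↥(algCl K : IntermediateField K Ω) := ⟨a, haA⟩ with ha'
  -- w on constants from the algebraic closure of K
  have hconst : ∀ c : ↥(algCl K : IntermediateField K Ω),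
      w (c : Ω) = WithTop.map emb (v (c : Ω)) := by
    intro c
    have h := hw (Polynomial.C c)
    rw [Polynomial.natDegree_C] at h
    simp only [zero_add, Finset.range_one, Finset.inf_singleton, Polynomial.taylor_coeff_zero,
      Polynomial.eval_C, zero_smul, WithTop.coe_zero, add_zero, Polynomial.aeval_C] at h
    rw [show (algebraMap ↥(algCl K : IntermediateField K Ω) Ω) c = (c : Ω) from rfl] at h
    exact h
  -- w on linear polynomials X - c
  have hlin : ∀ c : ↥(algCl K : IntermediateField K Ω),
      w (X - (c : Ω)) = min (WithTop.map emb (v (a - (c : Ω)))) (↑Γ₀ : WithTop (Γ ×ₗ ℤ)) := by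
    intro c
    have h := hw (Polynomial.X - Polynomial.C c)
    rw [Polynomial.natDegree_X_sub_C] at h
    have hr2 : Finset.range (1 + 1) = ({0, 1} : Finset ℕ) := rfl
    have htay : Polynomial.taylor a' (Polynomial.X - Polynomial.C c) =
        Polynomial.X + Polynomial.C (a' - c) := by
      rw [map_sub, Polynomial.taylor_X, Polynomial.taylor_C, Polynomial.C_sub,
        add_sub_assoc]
    rw [hr2, htay] at h
    simp only [Finset.inf_insert, Finset.inf_singleton, Polynomial.coeff_add, Polynomial.coeff_sub,
      Polynomial.coeff_X_zero, Polynomial.coeff_X_one, Polynomial.coeff_C_zero,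
      Polynomial.coeff_C, zero_add, add_zero, if_neg (one_ne_zero), if_true, sub_zero, zero_smul,
      WithTop.coe_zero, one_smul, map_sub, Polynomial.aeval_X, Polynomial.aeval_C] at h
    rw [show (algebraMap ↥(algCl K : IntermediateField K Ω) Ω) c = (c : Ω) from rfl] at h
    rw [show ((a' - c : ↥(algCl K : IntermediateField K Ω)) : Ω) = a - (c : Ω) from rfl] at h
    have hone : v (1 : Ω) = 0 := AddValuation.map_one v
    rw [show ((1 : ↥(algCl K : IntermediateField K Ω)) : Ω) = (1 : Ω) from rfl, hone] at h
    have h0 : WithTop.map emb ((0 : WithTop Γ)) = (0 : WithTop (Γ ×ₗ ℤ)) := by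
      rw [show ((0 : WithTop Γ)) = ((0 : Γ) : WithTop Γ) from rfl, WithTop.map_coe]
      rfl
    rw [h0, zero_add] at h
    exact h
  -- the key equivalence relating w and v on differences a - b for algebraic b
  have hcomp : ∀ b : Ω, IsAlgebraic K b →
      (((↑Γ₀ : WithTop (Γ ×ₗ ℤ)) ≤ w (a - b)) ↔ ((γ : WithTop Γ) ≤ v (a - b))) := by
    intro b hb
    have hmem : a - b ∈ (algCl K : IntermediateField K Ω) :=
      sub_mem haA (IntermediateField.subset_adjoin K {x : Ω | IsAlgebraic K x} hb)
    have hc := hconst ⟨a - b, hmem⟩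
    rw [show ((⟨a - b, hmem⟩ : ↥(algCl K : IntermediateField K Ω)) : Ω) = a - b from rfl] at hc
    rw [hc]
    cases hv : v (a - b) with
    | top => simp
    | coe δ =>
        rw [WithTop.map_coe, WithTop.coe_le_coe, WithTop.coe_le_coe]
        exact lex_le_iff γ δ
  -- Part 1: minimal pair
  have hmp' : IsMinimalPair K w X a Γ₀ := by
    refine ⟨hmp.1, ?_, ?_, ?_⟩
    · have h := hlin a'
      rw [show ((a' : Ω)) = a from rfl] at h
      rw [h, sub_self, v.map_zero]
      simp [min_eq_right le_top]
    · intro c hc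
      have hcm : c ∈ (algCl K : IntermediateField K Ω) :=
        IntermediateField.subset_adjoin K {x : Ω | IsAlgebraic K x} hc
      have h := hlin ⟨c, hcm⟩
      rw [show ((⟨c, hcm⟩ : ↥(algCl K : IntermediateField K Ω)) : Ω) = c from rfl] at h
      rw [h]
      exact min_le_right _ _
    · intro b hb hge
      exact hmp.2.2.2 b hb ((hcomp b hb).mp hge)
  refine ⟨hmp', ?_, ?_⟩
  -- Part 2: value transcendental
  · have hint : IsIntegral K a := hmp.1.isIntegral
    set q : Polynomial K := minpoly K a with hq
    set p : Polynomial ↥(algCl K : IntermediateField K Ω) :=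
      q.map (algebraMap K ↥(algCl K : IntermediateField K Ω)) with hp
    have hpmonic : p.Monic := (minpoly.monic hint).map _
    set n : ℕ := q.natDegree with hn
    have hpn : p.natDegree = n := (minpoly.monic hint).natDegree_map _
    have hnpos : 0 < n := minpoly.natDegree_pos hint
    set x : Ω := Polynomial.aeval X q with hx
    have hxp : Polynomial.aeval X p = x := Polynomial.aeval_map_algebraMap (↥(algCl K : IntermediateField K Ω)) X q
    have h := hw p
    rw [hxp, hpn] at h
    set t : ℕ → WithTop (Γ ×ₗ ℤ) := fun i =>
      WithTop.map emb (v (((Polynomial.taylor a' p).coeff i : Ω))) +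
        ((i • Γ₀ : Γ ×ₗ ℤ) : WithTop (Γ ×ₗ ℤ)) with ht
    have h : w x = Finset.inf (Finset.range (n + 1)) t := h
    -- coefficient 0 of the taylor expansion vanishes
    have hd0 : (((Polynomial.taylor a' p).coeff 0 : Ω)) = 0 := by
      rw [Polynomial.taylor_coeff_zero]
      have : (Polynomial.eval a' p) =
          Polynomial.aeval a' q := by
        rw [hp, Polynomial.eval_map, Polynomial.aeval_def]
      rw [this]
      have := Polynomial.aeval_algHom_apply
        (algCl K : IntermediateField K Ω).val a' q
      rw [show ((Polynomial.aeval a' q : ↥(algCl K : IntermediateField K Ω)) : Ω)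
          = (algCl K : IntermediateField K Ω).val (Polynomial.aeval a' q) from rfl, ← this]
      rw [show (algCl K : IntermediateField K Ω).val a' = a from rfl]
      exact minpoly.aeval K a
    have ht0 : t 0 = ⊤ := by
      rw [ht]
      simp only [hd0, v.map_zero, WithTop.map_top, top_add]
    -- the top coefficient is nonzero
    have htayne : Polynomial.taylor a' p ≠ 0 := by
      intro hcon
      have : p = 0 := Polynomial.taylor_injective a' (by rw [hcon]; simp)
      exact hpmonic.ne_zero this
    have hdn : (((Polynomial.taylor a' p).coeff n : Ω)) ≠ 0 := by
      have hnd : (Polynomial.taylor a' p).natDegree = n := by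
        rw [Polynomial.natDegree_taylor, hpn]
      have : (Polynomial.taylor a' p).coeff n ≠ 0 := by
        rw [← hnd]
        exact Polynomial.coeff_ne_zero_of_eq_degree
          (Polynomial.degree_eq_natDegree htayne)
      simpa using this
    have htn_ne : t n ≠ ⊤ := by
      rw [ht]
      intro hcon
      rcases WithTop.add_eq_top.mp hcon with hcon | hcon
      · cases hv : v (((Polynomial.taylor a' p).coeff n : Ω)) with
        | top => exact addval_ne_top v hdn hv
        | coe δ => rw [hv, WithTop.map_coe] at hcon; exact WithTop.coe_ne_top hcon
      · exact WithTop.coe_ne_top hcon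
    obtain ⟨i₀, hi₀mem, hi₀⟩ := Finset.exists_mem_eq_inf (Finset.range (n + 1))
      ⟨0, Finset.mem_range.mpr (Nat.succ_pos n)⟩ t
    have hwx : w x = t i₀ := by rw [h, hi₀]
    have hti₀_ne : t i₀ ≠ ⊤ := by
      intro hcon
      apply htn_ne
      refine le_antisymm le_top ?_
      rw [← hcon, ← hi₀]
      exact Finset.inf_le (Finset.mem_range.mpr (Nat.lt_succ_self n))
    have hi₀ne0 : i₀ ≠ 0 := by
      intro hcon
      rw [hcon, ht0] at hti₀_ne
      exact hti₀_ne rfl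
    -- extract the finite value
    have hvd : ∃ δ : Γ, v (((Polynomial.taylor a' p).coeff i₀ : Ω)) = (δ : WithTop Γ) := by
      cases hv : v (((Polynomial.taylor a' p).coeff i₀ : Ω)) with
      | top =>
          exfalso; apply hti₀_ne
          rw [ht]; simp only [hv, WithTop.map_top, top_add]
      | coe δ => exact ⟨δ, rfl⟩
    obtain ⟨δ, hδ⟩ := hvd
    set g : Γ ×ₗ ℤ := emb δ + i₀ • Γ₀ with hg
    have hwxg : w x = (g : WithTop (Γ ×ₗ ℤ)) := by
      rw [hwx, ht]
      simp only [hδ, WithTop.map_coe]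
      rw [← WithTop.coe_add]
    have hπg : sndHom g = -(i₀ : ℤ) := by
      rw [hg, map_add]
      have h1 : sndHom (emb δ) = 0 := rfl
      have h2 : sndHom (i₀ • Γ₀) = i₀ • sndHom Γ₀ := AddMonoidHom.map_nsmul sndHom i₀ Γ₀
      have h3 : sndHom Γ₀ = -1 := rfl
      rw [h1, h2, h3, zero_add]
      simp
    -- x is a nonzero element of K(X)
    have hxne : x ≠ 0 := by
      intro hcon
      exact hX ⟨q, minpoly.ne_zero hint, hcon⟩
    have hxmem : x ∈ IntermediateField.adjoin K {X} := by
      have := Polynomial.aeval_mem_adjoin_singleton K (p := q) X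
      exact IntermediateField.algebra_adjoin_le_adjoin K {X} this
    refine ⟨g, AddSubgroup.subset_closure ⟨x, hxmem, hxne, hwxg⟩, ?_⟩
    intro m hm hmem
    -- every value of w on ⊥ has vanishing second coordinate
    have hbot : valGroup K w (⊥ : IntermediateField K Ω) ≤ sndHom.ker := by
      rw [valGroup, AddSubgroup.closure_le]
      rintro h' ⟨y, hyF, hy0, hyw⟩
      have hyalg : IsAlgebraic K y := by
        obtain ⟨k, hk⟩ := IntermediateField.mem_bot.mp hyF
        rw [← hk]
        exact isAlgebraic_algebraMap k
      have hymem : y ∈ (algCl K : IntermediateField K Ω) :=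
        IntermediateField.subset_adjoin K {x : Ω | IsAlgebraic K x} hyalg
      have hc := hconst ⟨y, hymem⟩
      rw [show ((⟨y, hymem⟩ : ↥(algCl K : IntermediateField K Ω)) : Ω) = y from rfl] at hc
      rw [hyw] at hc
      cases hv : v y with
      | top => exact absurd hv (addval_ne_top v hy0)
      | coe δ' =>
          rw [hv, WithTop.map_coe] at hc
          have : h' = emb δ' := WithTop.coe_injective hc
          show sndHom h' = 0
          rw [this]
          rfl
    have := hbot hmem
    rw [AddMonoidHom.mem_ker, AddMonoidHom.map_nsmul, hπg] at this
    have hzero : (m : ℤ) * (i₀ : ℤ) = 0 := by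
      simpa [smul_eq_mul, mul_neg, neg_eq_zero] using this
    have hm' : (m : ℤ) ≠ 0 := Int.natCast_ne_zero.mpr hm.ne'
    have hi' : (i₀ : ℤ) ≠ 0 := Int.natCast_ne_zero.mpr hi₀ne0
    exact mul_ne_zero hm' hi' hzero
  -- Part 3: jnum equality
  · unfold jnum
    refine congrArg Multiset.card (Multiset.filter_congr ?_)
    intro r hr
    have hralg : IsAlgebraic K r :=
      ⟨minpoly K a, minpoly.ne_zero hmp.1.isIntegral, (Polynomial.mem_aroots.mp hr).2⟩
    exact ((hcomp r hralg).symm)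


end ValPaper
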